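/- Let S be a finite nonempty subset of ℝ^n with radius R = sup_{x ∈ S} ‖x‖_2, and let σ_1, …, σ_n be i.i.d. Rademacher random variables. Then E[ sup_{x ∈ S} (1/n) ∑_{i=1}^n σ_i x_i ] ≤ R √(2 log |S|) / n. -/

import Mathlib

open Finset Real

lemma massart_mgf (n : ℕ) (c : Fin n → ℝ) :
    ∑ σ : Fin n → Bool, Real.exp (∑ i, (if σ i then (1:ℝ) else -1) * c i)
      = ∏ i, (Real.exp (c i) + Real.exp (-c i)) := by
  have h2 : ∀ i : Fin n, Real.exp (c i) + Real.exp (-c i)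
      = ∑ b : Bool, Real.exp ((if b then (1:ℝ) else -1) * c i) := by
    intro i; rw [Fintype.sum_bool]; simp [add_comm]
  simp_rw [h2, Fintype.prod_sum (κ := fun _ : Fin n => Bool)
    (f := fun i b => Real.exp ((if b then (1:ℝ) else -1) * c i)), Real.exp_sum]

lemma massart_mgf_le (n : ℕ) (c : Fin n → ℝ) :
    ((2:ℝ)^n)⁻¹ * ∑ σ : Fin n → Bool, Real.exp (∑ i, (if σ i then (1:ℝ) else -1) * c i)
      ≤ Real.exp ((∑ i, (c i)^2) / 2) := by
  rw [massart_mgf]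
  have h1 : ∀ i : Fin n, Real.exp (c i) + Real.exp (-c i) = 2 * Real.cosh (c i) := by
    intro i; rw [Real.cosh_eq]; ring
  simp_rw [h1]
  rw [Finset.prod_mul_distrib, Finset.prod_const, Finset.card_univ, Fintype.card_fin]
  rw [inv_mul_le_iff₀ (show (0:ℝ) < 2^n by positivity)]
  refine mul_le_mul_of_nonneg_left ?_ (by positivity)
  calc ∏ i, Real.cosh (c i) ≤ ∏ i, Real.exp ((c i)^2 / 2) := by
        apply Finset.prod_le_prod (fun i _ => (Real.cosh_pos (c i)).le)
          (fun i _ => Real.cosh_le_exp_half_sq (c i))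
    _ = Real.exp ((∑ i, (c i)^2) / 2) := by
        rw [← Real.exp_sum, Finset.sum_div]

lemma massart_sup'_const_mul {α : Type*} (s : Finset α) (hs : s.Nonempty) (c : ℝ) (hc : 0 ≤ c)
    (f : α → ℝ) : s.sup' hs (fun x => c * f x) = c * s.sup' hs f := by
  rw [Finset.comp_sup'_eq_sup'_comp hs (fun y => c * y)
    (fun x y => by simpa using mul_max_of_nonneg x y hc)]
  rfl

lemma massart_exp_sup' {α : Type*} (s : Finset α) (hs : s.Nonempty) (f : α → ℝ) :
    Real.exp (s.sup' hs f) = s.sup' hs (fun x => Real.exp (f x)) := by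
  rw [Finset.comp_sup'_eq_sup'_comp hs Real.exp
    (fun x y => by simpa using Real.exp_monotone.map_max (a := x) (b := y))]
  rfl

lemma massart_sum_zero (n : ℕ) (a : Fin n → ℝ) :
    ∑ σ : Fin n → Bool, (∑ i, (if σ i then (1:ℝ) else -1) * a i) = 0 := by
  set f : (Fin n → Bool) → ℝ := fun σ => ∑ i, (if σ i then (1:ℝ) else -1) * a i with hf
  have hb : Function.Bijective (fun σ : Fin n → Bool => fun i => !σ i) := by
    constructor
    · intro σ τ h
      funext i
      have := congrFun h i
      simpa using this
    · intro σ; exact ⟨fun i => !σ i, by funext i; simp⟩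
  have key : ∑ σ : Fin n → Bool, f σ = ∑ σ : Fin n → Bool, -(f σ) := by
    rw [← Fintype.sum_bijective _ hb (fun σ => -(f σ)) f ?_]
    intro σ
    show -(f σ) = f (fun i => !σ i)
    simp only [hf, ← Finset.sum_neg_distrib]
    apply Finset.sum_congr rfl
    intro i _
    obtain h | h := Bool.eq_false_or_eq_true (σ i) <;> simp [h]
  have := key
  rw [Finset.sum_neg_distrib] at this
  linarith

lemma massart_aux (n : ℕ) (S : Finset (EuclideanSpace ℝ (Fin n))) (hS : S.Nonempty) :
    ((2:ℝ)^n)⁻¹ * ∑ σ : Fin n → Bool,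
        S.sup' hS (fun x => ∑ i, (if σ i then (1:ℝ) else -1) * x i)
      ≤ (S.sup' hS fun x => ‖x‖) * Real.sqrt (2 * Real.log S.card) := by
  set R := S.sup' hS fun x => ‖x‖ with hRdef
  obtain ⟨a, ha⟩ := id hS
  have hR0 : 0 ≤ R := le_trans (norm_nonneg a) (Finset.le_sup' _ ha)
  by_cases h1 : S.card = 1
  · obtain ⟨b, hb⟩ := Finset.card_eq_one.mp h1
    subst hb
    simp only [Finset.sup'_singleton]
    rw [massart_sum_zero n (fun i => b i)]
    simp
  · have h2 : 2 ≤ S.card := by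
      have := Finset.card_pos.mpr hS
      omega
    have hN1 : (1:ℝ) < S.card := by exact_mod_cast h2
    have hL : 0 < Real.log S.card := Real.log_pos hN1
    set L := Real.log (S.card : ℝ) with hLdef
    by_cases hR : R = 0
    · have hx0 : ∀ x ∈ S, (x : EuclideanSpace ℝ (Fin n)) = 0 := fun x hx =>
        norm_eq_zero.mp (le_antisymm (hR ▸ Finset.le_sup' _ hx) (norm_nonneg x))
    -- every sup' is zero
      have hsup : ∀ σ : Fin n → Bool,
          S.sup' hS (fun x => ∑ i, (if σ i then (1:ℝ) else -1) * x i) = 0 := by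
        intro σ
        apply le_antisymm
        · apply Finset.sup'_le
          intro x hx
          rw [hx0 x hx]
          simp
        · refine le_trans (le_of_eq ?_) (Finset.le_sup' _ ha)
          rw [hx0 a ha]
          simp
      rw [hR, zero_mul]
      simp only [hsup, Finset.sum_const_zero, mul_zero]
      exact le_refl 0
    · have hRpos : 0 < R := lt_of_le_of_ne hR0 (Ne.symm hR)
      have h2L : 0 < 2 * L := by linarith
      have hsq : 0 < Real.sqrt (2*L) := Real.sqrt_pos.mpr h2L
      set lam := Real.sqrt (2*L) / R with hlam
      have hlampos : 0 < lam := div_pos hsq hRpos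
      have hw0 : (0:ℝ) ≤ ((2:ℝ)^n)⁻¹ := by positivity
      have hwsum : ∑ _σ : Fin n → Bool, ((2:ℝ)^n)⁻¹ = 1 := by
        rw [Finset.sum_const, Finset.card_univ]
        simp only [Fintype.card_fun, Fintype.card_bool, Fintype.card_fin]
        rw [nsmul_eq_mul]
        push_cast
        rw [mul_inv_cancel₀ (by positivity)]
      -- Jensen
      have jensen : Real.exp (lam * (((2:ℝ)^n)⁻¹ * ∑ σ : Fin n → Bool,
            S.sup' hS (fun x => ∑ i, (if σ i then (1:ℝ) else -1) * x i)))
          ≤ ∑ σ : Fin n → Bool, ((2:ℝ)^n)⁻¹ * Real.exp (lam *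
            S.sup' hS (fun x => ∑ i, (if σ i then (1:ℝ) else -1) * x i)) := by
        have heq : lam * (((2:ℝ)^n)⁻¹ * ∑ σ : Fin n → Bool,
              S.sup' hS (fun x => ∑ i, (if σ i then (1:ℝ) else -1) * x i))
            = ∑ σ : Fin n → Bool, ((2:ℝ)^n)⁻¹ • (lam *
              S.sup' hS (fun x => ∑ i, (if σ i then (1:ℝ) else -1) * x i)) := by
          simp only [smul_eq_mul, Finset.mul_sum]
          apply Finset.sum_congr rfl
          intro σ _
          ring
        rw [heq]
        exact convexOn_exp.map_sum_le (fun _ _ => hw0) hwsum (fun _ _ => Set.mem_univ _)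
      -- bound each exp (lam * M σ) by the sum over S
      have hexp_le : ∀ σ : Fin n → Bool, Real.exp (lam *
            S.sup' hS (fun x => ∑ i, (if σ i then (1:ℝ) else -1) * x i))
          ≤ ∑ x ∈ S, Real.exp (lam * ∑ i, (if σ i then (1:ℝ) else -1) * x i) := by
        intro σ
        rw [← massart_sup'_const_mul S hS lam hlampos.le, massart_exp_sup']
        apply Finset.sup'_le
        intro x hx
        exact Finset.single_le_sum (f := fun x : EuclideanSpace ℝ (Fin n) =>
          Real.exp (lam * ∑ i, (if σ i then (1:ℝ) else -1) * x i))
          (fun y _ => (Real.exp_pos _).le) hx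
      -- MGF bound for each x
      have hmgf : ∀ x ∈ S, ((2:ℝ)^n)⁻¹ * ∑ σ : Fin n → Bool,
          Real.exp (lam * ∑ i, (if σ i then (1:ℝ) else -1) * x i) ≤ Real.exp L := by
        intro x hx
        have hc : (∑ σ : Fin n → Bool, Real.exp (lam * ∑ i, (if σ i then (1:ℝ) else -1) * x i))
            = ∑ σ : Fin n → Bool, Real.exp (∑ i, (if σ i then (1:ℝ) else -1) * (lam * x i)) := by
          apply Finset.sum_congr rfl
          intro σ _
          congr 1
          rw [Finset.mul_sum]
          apply Finset.sum_congr rfl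
          intro i _
          ring
        rw [hc]
        refine le_trans (massart_mgf_le n (fun i => lam * x i)) ?_
        apply Real.exp_le_exp.mpr
        have hnorm : ∑ i, (x i)^2 = ‖x‖^2 := by
          rw [EuclideanSpace.norm_eq, Real.sq_sqrt (by positivity)]
          apply Finset.sum_congr rfl
          intro i _
          rw [Real.norm_eq_abs, sq_abs]
        have hxR : ‖x‖ ≤ R := Finset.le_sup' _ hx
        have hsum : ∑ i, (lam * x i)^2 = lam^2 * ‖x‖^2 := by
          rw [← hnorm, Finset.mul_sum]
          apply Finset.sum_congr rfl
          intro i _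
          ring
        rw [hsum]
        have hlamsq : lam^2 * R^2 = 2*L := by
          rw [hlam, div_pow, Real.sq_sqrt h2L.le, div_mul_cancel₀]
          positivity
        have hle2 : lam^2 * ‖x‖^2 ≤ lam^2 * R^2 := by
          apply mul_le_mul_of_nonneg_left _ (by positivity)
          exact pow_le_pow_left₀ (norm_nonneg x) hxR 2
        rw [hlamsq] at hle2
        linarith
      -- combine
      have key : Real.exp (lam * (((2:ℝ)^n)⁻¹ * ∑ σ : Fin n → Bool,
            S.sup' hS (fun x => ∑ i, (if σ i then (1:ℝ) else -1) * x i)))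
          ≤ Real.exp (L + L) := by
        refine le_trans jensen ?_
        calc ∑ σ : Fin n → Bool, ((2:ℝ)^n)⁻¹ * Real.exp (lam *
              S.sup' hS (fun x => ∑ i, (if σ i then (1:ℝ) else -1) * x i))
            ≤ ∑ σ : Fin n → Bool, ((2:ℝ)^n)⁻¹ * ∑ x ∈ S,
                Real.exp (lam * ∑ i, (if σ i then (1:ℝ) else -1) * x i) := by
              apply Finset.sum_le_sum
              intro σ _
              exact mul_le_mul_of_nonneg_left (hexp_le σ) hw0
          _ = ∑ x ∈ S, ((2:ℝ)^n)⁻¹ * ∑ σ : Fin n → Bool,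
                Real.exp (lam * ∑ i, (if σ i then (1:ℝ) else -1) * x i) := by
              simp_rw [← Finset.mul_sum]
              rw [Finset.sum_comm]
          _ ≤ ∑ _x ∈ S, Real.exp L := Finset.sum_le_sum hmgf
          _ = S.card * Real.exp L := by
              rw [Finset.sum_const, nsmul_eq_mul]
          _ = Real.exp (L + L) := by
              rw [Real.exp_add, hLdef, Real.exp_log (by positivity)]
      have hAle : lam * (((2:ℝ)^n)⁻¹ * ∑ σ : Fin n → Bool,
            S.sup' hS (fun x => ∑ i, (if σ i then (1:ℝ) else -1) * x i)) ≤ 2*L := by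
        have := Real.exp_le_exp.mp key
        linarith
      have hfin : lam * (R * Real.sqrt (2*L)) = 2*L := by
        have hss : Real.sqrt (2*L) * Real.sqrt (2*L) = 2*L := Real.mul_self_sqrt h2L.le
        rw [hlam, div_mul_eq_mul_div,
          show Real.sqrt (2*L) * (R * Real.sqrt (2*L)) = (Real.sqrt (2*L) * Real.sqrt (2*L)) * R
            by ring, hss, mul_div_assoc, div_self hRpos.ne', mul_one]
      exact le_of_mul_le_mul_left (by linarith [hAle, hfin]) hlampos

/-- Massart's finite class lemma: for a finite nonempty set `S ⊆ ℝ^n` of radius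
`R = max_{x ∈ S} ‖x‖₂`, the expected supremum over `S` of the Rademacher average
`(1/n) ∑ᵢ σᵢ xᵢ` (expectation over the `2^n` uniform sign vectors) is at most
`R √(2 log |S|) / n`. -/
theorem massart_finite_class_lemma
    (n : ℕ) (S : Finset (EuclideanSpace ℝ (Fin n))) (hS : S.Nonempty) :
    ((2 : ℝ) ^ n)⁻¹ * ∑ σ : Fin n → Bool,
        S.sup' hS (fun x => (n : ℝ)⁻¹ * ∑ i, (if σ i then (1 : ℝ) else -1) * x i)
      ≤ (S.sup' hS fun x => ‖x‖) * Real.sqrt (2 * Real.log S.card) / n := by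
  have hpull : (∑ σ : Fin n → Bool,
      S.sup' hS (fun x => (n : ℝ)⁻¹ * ∑ i, (if σ i then (1:ℝ) else -1) * x i))
        = ∑ σ : Fin n → Bool,
          (n : ℝ)⁻¹ * S.sup' hS (fun x => ∑ i, (if σ i then (1:ℝ) else -1) * x i) :=
    Finset.sum_congr rfl (fun σ _ => massart_sup'_const_mul S hS _ (by positivity) _)
  rw [hpull, ← Finset.mul_sum, div_eq_mul_inv]
  calc ((2:ℝ)^n)⁻¹ * ((n:ℝ)⁻¹ * ∑ σ : Fin n → Bool,
          S.sup' hS (fun x => ∑ i, (if σ i then (1:ℝ) else -1) * x i))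
      = (n:ℝ)⁻¹ * (((2:ℝ)^n)⁻¹ * ∑ σ : Fin n → Bool,
          S.sup' hS (fun x => ∑ i, (if σ i then (1:ℝ) else -1) * x i)) := by ring
    _ ≤ (n:ℝ)⁻¹ * ((S.sup' hS fun x => ‖x‖) * Real.sqrt (2 * Real.log S.card)) :=
        mul_le_mul_of_nonneg_left (massart_aux n S hS) (by positivity)
    _ = (S.sup' hS fun x => ‖x‖) * Real.sqrt (2 * Real.log S.card) * ((n:ℝ))⁻¹ := by ring
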